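/- Let R = {(0,1),(0,2),(1,1),(1,2)}. The mesh patterns p1 = (12, R) and p2 = (21, R) are jointly equidistributed. -/

import Mathlib

/-- The boundary-extended sequence of positions of a candidate occurrence:
`posExt i 0 = 0`, `posExt i a = i (a-1) + 1` (1-based position) for `1 ≤ a ≤ m`,
and `posExt i (m+1) = n + 1`. -/
def posExt {m n : ℕ} (i : Fin m → Fin n) : ℕ → ℕ := fun a =>
  if h : 1 ≤ a ∧ a ≤ m then ((i ⟨a - 1, by omega⟩ : Fin n) : ℕ) + 1
  else if a = 0 then 0 else n + 1

/-- The boundary-extended increasing rearrangement of the values of a candidate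
occurrence: `valExt τ π i 0 = 0`, `valExt τ π i b = π (i (τ⁻¹ (b-1))) + 1`
(the `b`-th smallest value, 1-based) for `1 ≤ b ≤ m`, and `valExt τ π i (m+1) = n + 1`. -/
def valExt {m n : ℕ} (τ : Equiv.Perm (Fin m)) (π : Equiv.Perm (Fin n))
    (i : Fin m → Fin n) : ℕ → ℕ := fun b =>
  if h : 1 ≤ b ∧ b ≤ m then ((π (i (τ.symm ⟨b - 1, by omega⟩)) : Fin n) : ℕ) + 1
  else if b = 0 then 0 else n + 1

/-- `i : Fin m → Fin n` is an occurrence of the mesh pattern `(τ, R)` in the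
permutation `π` of `{1, …, n}` (positions and values are taken 1-based via `+1`). -/
def IsMeshOcc {m n : ℕ} (τ : Equiv.Perm (Fin m)) (R : Set (ℕ × ℕ))
    (π : Equiv.Perm (Fin n)) (i : Fin m → Fin n) : Prop :=
  StrictMono i ∧
  (∀ a b : Fin m, π (i a) < π (i b) ↔ τ a < τ b) ∧
  ∀ a b : ℕ, (a, b) ∈ R →
    ¬ ∃ j : Fin n,
        posExt i a < (j : ℕ) + 1 ∧ (j : ℕ) + 1 < posExt i (a + 1) ∧
        valExt τ π i b < ((π j : Fin n) : ℕ) + 1 ∧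
        ((π j : Fin n) : ℕ) + 1 < valExt τ π i (b + 1)

/-- The number of occurrences of the mesh pattern `(τ, R)` in `π`. -/
noncomputable def occ {m n : ℕ} (τ : Equiv.Perm (Fin m)) (R : Set (ℕ × ℕ))
    (π : Equiv.Perm (Fin n)) : ℕ :=
  Nat.card {i : Fin m → Fin n // IsMeshOcc τ R π i}

/-- Mesh patterns `(τ₁, R₁)` and `(τ₂, R₂)` are jointly equidistributed. -/
def JointlyEquidistributed {m₁ m₂ : ℕ} (τ₁ : Equiv.Perm (Fin m₁)) (R₁ : Set (ℕ × ℕ))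
    (τ₂ : Equiv.Perm (Fin m₂)) (R₂ : Set (ℕ × ℕ)) : Prop :=
  ∀ n k ℓ : ℕ,
    Nat.card {π : Equiv.Perm (Fin n) // occ τ₁ R₁ π = k ∧ occ τ₂ R₂ π = ℓ} =
    Nat.card {π : Equiv.Perm (Fin n) // occ τ₁ R₁ π = ℓ ∧ occ τ₂ R₂ π = k}

/-- The pattern 123 (identity on three letters). -/
def perm123 : Equiv.Perm (Fin 3) := 1

/-- The pattern 132 (0-indexed: `0 ↦ 0`, `1 ↦ 2`, `2 ↦ 1`). -/
def perm132 : Equiv.Perm (Fin 3) := Equiv.swap 1 2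

/-- The pattern 12 (identity on two letters). -/
def perm12 : Equiv.Perm (Fin 2) := 1

/-- The pattern 21. -/
def perm21 : Equiv.Perm (Fin 2) := Equiv.swap 0 1

/-- The unsigned Stirling numbers of the first kind. -/
def stirlingFirst : ℕ → ℕ → ℕ
  | 0, 0 => 1
  | 0, _ + 1 => 0
  | _ + 1, 0 => 0
  | n + 1, k + 1 => n * stirlingFirst n (k + 1) + stirlingFirst n k


section Aux
open Finset
set_option linter.unreachableTactic false
set_option linter.unusedTactic false

variable {n : ℕ}

def code {n : ℕ} (π : Equiv.Perm (Fin n)) (t : Fin n) : ℕ :=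
  (Finset.univ.filter (fun s => s < t ∧ π t < π s)).card

lemma code_le (π : Equiv.Perm (Fin n)) (t : Fin n) : code π t ≤ (t : ℕ) := by
  have h : (univ.filter (fun s => s < t ∧ π t < π s)) ⊆ Finset.Iio t := by
    intro s hs
    simp only [mem_filter] at hs
    exact Finset.mem_Iio.2 hs.2.1
  calc code π t ≤ (Finset.Iio t).card := Finset.card_le_card h
    _ = (t : ℕ) := Fin.card_Iio t

lemma code_eq_zero_iff (π : Equiv.Perm (Fin n)) (t : Fin n) :
    code π t = 0 ↔ ∀ s, s < t → π s < π t := by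
  rw [code, Finset.card_eq_zero, Finset.filter_eq_empty_iff]
  constructor
  · intro h s hs
    have := h (Finset.mem_univ s)
    have hne : π s ≠ π t := fun hh => absurd (π.injective hh) (ne_of_lt hs)
    rcases lt_or_gt_of_ne hne with h1 | h1
    · exact h1
    · exact absurd ⟨hs, h1⟩ this
  · intro h s _
    rintro ⟨hs, hlt⟩
    exact absurd (h s hs) (not_lt.2 (le_of_lt hlt))

lemma code_eq_one_iff (π : Equiv.Perm (Fin n)) (t : Fin n) :
    code π t = 1 ↔ ∃ u, u < t ∧ π t < π u ∧ ∀ s, s < t → s ≠ u → π s < π t := by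
  rw [code, Finset.card_eq_one]
  constructor
  · rintro ⟨u, hu⟩
    have humem : u ∈ univ.filter (fun s => s < t ∧ π t < π s) := hu ▸ Finset.mem_singleton_self u
    simp only [mem_filter] at humem
    refine ⟨u, humem.2.1, humem.2.2, fun s hs hne => ?_⟩
    have : s ∉ univ.filter (fun s => s < t ∧ π t < π s) := by
      rw [hu]; simpa using hne
    simp only [mem_filter, mem_univ, true_and, not_and] at this
    have hlt := this hs
    have hne' : π s ≠ π t := fun hh => absurd (π.injective hh) (ne_of_lt hs)
    rcases lt_or_gt_of_ne hne' with h1 | h1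
    · exact h1
    · exact absurd h1 hlt
  · rintro ⟨u, hu, hv, hall⟩
    refine ⟨u, ?_⟩
    ext s
    simp only [mem_filter, mem_univ, true_and, Finset.mem_singleton]
    constructor
    · rintro ⟨hs, hlt⟩
      by_contra hne
      exact absurd (hall s hs hne) (not_lt.2 (le_of_lt hlt))
    · rintro rfl; exact ⟨hu, hv⟩

/-- generic counting lemma -/
lemma eq_of_card_filter_lt {α : Type*} [LinearOrder α] [DecidableEq α] (A : Finset α)
    (a b : α) (ha : a ∈ A) (hb : b ∈ A)
    (h : (A.filter (fun v => a < v)).card = (A.filter (fun v => b < v)).card) : a = b := by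
  have key : ∀ x y : α, x ∈ A → y ∈ A → x < y →
      (A.filter (fun v => y < v)).card < (A.filter (fun v => x < v)).card := by
    intro x y _ hy hxy
    apply Finset.card_lt_card
    constructor
    · intro v hv
      simp only [Finset.mem_filter] at hv ⊢
      exact ⟨hv.1, lt_trans hxy hv.2⟩
    · intro hsub
      have : y ∈ A.filter (fun v => x < v) := Finset.mem_filter.2 ⟨hy, hxy⟩
      have := hsub this
      simp only [Finset.mem_filter] at this
      exact absurd this.2 (lt_irrefl y)
  rcases lt_trichotomy a b with h1 | h1 | h1
  · exact absurd h (ne_of_gt (key a b ha hb h1))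
  · exact h1
  · exact absurd h (ne_of_lt (key b a hb ha h1))

/-- code in terms of unused values -/
lemma code_eq_unused (π : Equiv.Perm (Fin n)) (t : Fin n) :
    code π t = ((univ.filter (fun v => ∀ s, t < s → π s ≠ v)).filter
      (fun v => π t < v)).card := by
  rw [code, ← Finset.card_image_of_injective _ π.injective]
  congr 1
  ext v
  simp only [Finset.mem_image, mem_filter, mem_univ, true_and]
  constructor
  · rintro ⟨s, ⟨hst, hlt⟩, rfl⟩
    refine ⟨fun s' hs' hh => ?_, hlt⟩
    have heq := π.injective hh
    rw [heq] at hs'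
    exact absurd (lt_trans hst hs') (lt_irrefl s)
  · rintro ⟨hunused, hlt⟩
    refine ⟨π.symm v, ⟨?_, by simpa using hlt⟩, by simp⟩
    have hne : π.symm v ≠ t := by
      intro hh
      rw [← hh] at hlt; simp at hlt
    have hnot : ¬ t < π.symm v := by
      intro hh
      exact hunused _ hh (by simp)
    rcases lt_trichotomy (π.symm v) t with h1 | h1 | h1
    · exact h1
    · exact absurd h1 hne
    · exact absurd h1 hnot

lemma code_step (π σ : Equiv.Perm (Fin n)) (t : Fin n) (hc : code π t = code σ t)
    (h : ∀ s, t < s → π s = σ s) : π t = σ t := by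
  set A := univ.filter (fun v => ∀ s, t < s → π s ≠ v) with hA
  have hAeq : univ.filter (fun v => ∀ s, t < s → σ s ≠ v) = A := by
    apply Finset.filter_congr
    intro v _
    constructor <;> intro hh s hs <;> [rw [h s hs]; rw [← h s hs]] <;> exact hh s hs
  have h1 : code π t = (A.filter (fun v => π t < v)).card := code_eq_unused π t
  have h2 : code σ t = (A.filter (fun v => σ t < v)).card := by
    rw [code_eq_unused σ t, hAeq]
  have hπA : π t ∈ A := by
    simp only [hA, mem_filter, mem_univ, true_and]
    intro s hs hh
    exact absurd (π.injective hh) (ne_of_gt hs)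
  have hσA : σ t ∈ A := by
    rw [← hAeq]
    simp only [mem_filter, mem_univ, true_and]
    intro s hs hh
    exact absurd (σ.injective hh) (ne_of_gt hs)
  exact eq_of_card_filter_lt A (π t) (σ t) hπA hσA (by rw [← h1, ← h2, hc])

lemma code_inj (π σ : Equiv.Perm (Fin n)) (hc : ∀ t, code π t = code σ t) : π = σ := by
  have H : ∀ k : ℕ, ∀ t : Fin n, n ≤ (t : ℕ) + k → π t = σ t := by
    intro k
    induction k with
    | zero => intro t ht; exact absurd t.isLt (by omega)
    | succ k ih =>
      intro t ht
      apply code_step π σ t (hc t)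
      intro s hs
      apply ih
      have : (t : ℕ) < (s : ℕ) := hs
      omega
  ext t
  have := H n t (by omega)
  exact congrArg Fin.val this

def codeFn (π : Equiv.Perm (Fin n)) : ∀ t : Fin n, Fin ((t : ℕ) + 1) :=
  fun t => ⟨code π t, by have := code_le π t; omega⟩

lemma codeFn_bijective : Function.Bijective (codeFn (n := n)) := by
  rw [Fintype.bijective_iff_injective_and_card]
  constructor
  · intro π σ h
    apply code_inj
    intro t
    have := congrFun h t
    exact congrArg Fin.val this
  · rw [Fintype.card_perm, Fintype.card_pi]
    simp only [Fintype.card_fin]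
    induction n with
    | zero => simp
    | succ m ih =>
      rw [Fin.prod_univ_castSucc]
      simp only [Fin.coe_castSucc, Fin.val_last] at *
      rw [Nat.factorial_succ, ih, Nat.mul_comm]

noncomputable def codeEquiv : Equiv.Perm (Fin n) ≃ (∀ t : Fin n, Fin ((t : ℕ) + 1)) :=
  Equiv.ofBijective codeFn codeFn_bijective

noncomputable def Phi : Equiv.Perm (Fin n) ≃ Equiv.Perm (Fin n) :=
  codeEquiv.trans ((Equiv.piCongrRight (fun t : Fin n => Equiv.swap (0 : Fin ((t : ℕ) + 1)) 1)).trans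
    codeEquiv.symm)

lemma code_phi (π : Equiv.Perm (Fin n)) (t : Fin n) :
    code (Phi π) t = (Equiv.swap (0 : Fin ((t : ℕ) + 1)) 1 (codeFn π t) : ℕ) := by
  have h1 : codeEquiv (Phi π) =
      Equiv.piCongrRight (fun t : Fin n => Equiv.swap (0 : Fin ((t : ℕ) + 1)) 1) (codeEquiv π) := by
    simp [Phi]
  have h2 : codeFn (Phi π) t = Equiv.swap (0 : Fin ((t : ℕ) + 1)) 1 (codeFn π t) := by
    calc codeFn (Phi π) t = codeEquiv (Phi π) t := rfl
      _ = (Equiv.piCongrRight fun t : Fin n =>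
            Equiv.swap (0 : Fin ((t : ℕ) + 1)) 1) (codeEquiv π) t := by rw [h1]
      _ = Equiv.swap (0 : Fin ((t : ℕ) + 1)) 1 (codeFn π t) := rfl
  exact congrArg Fin.val h2

lemma val_one_fin (t : ℕ) (ht : 1 ≤ t) : ((1 : Fin (t + 1)) : ℕ) = 1 := by
  rw [Fin.val_one']
  exact Nat.mod_eq_of_lt (by omega)

lemma swap01_val_zero_iff (k : ℕ) (hk : 1 ≤ k) (x : Fin (k + 1)) :
    ((Equiv.swap (0 : Fin (k + 1)) 1 x : Fin (k + 1)) : ℕ) = 0 ↔ (x : ℕ) = 1 := by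
  have h1 : ((1 : Fin (k + 1)) : ℕ) = 1 := val_one_fin k hk
  rw [Equiv.swap_apply_def]
  split_ifs with ha hb
  · subst ha; simp [h1]; omega
  · subst hb; simp [h1]; omega
  · have hx0 : (x : ℕ) ≠ 0 := fun h => ha (Fin.ext h)
    have hx1 : (x : ℕ) ≠ 1 := fun h => hb (Fin.ext (by rw [h1]; exact h))
    simp [hx0, hx1]

lemma swap01_val_one_iff (k : ℕ) (hk : 1 ≤ k) (x : Fin (k + 1)) :
    ((Equiv.swap (0 : Fin (k + 1)) 1 x : Fin (k + 1)) : ℕ) = 1 ↔ (x : ℕ) = 0 := by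
  have h1 : ((1 : Fin (k + 1)) : ℕ) = 1 := val_one_fin k hk
  rw [Equiv.swap_apply_def]
  split_ifs with ha hb
  · subst ha; simp [h1]; omega
  · subst hb; simp [h1]; omega
  · have hx0 : (x : ℕ) ≠ 0 := fun h => ha (Fin.ext h)
    have hx1 : (x : ℕ) ≠ 1 := fun h => hb (Fin.ext (by rw [h1]; exact h))
    simp [hx0, hx1]

lemma code_phi_zero_iff (π : Equiv.Perm (Fin n)) (t : Fin n) (ht : (t : ℕ) ≠ 0) :
    code (Phi π) t = 0 ↔ code π t = 1 := by
  rw [code_phi]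
  exact swap01_val_zero_iff _ (by omega) _

lemma code_phi_one_iff (π : Equiv.Perm (Fin n)) (t : Fin n) (ht : (t : ℕ) ≠ 0) :
    code (Phi π) t = 1 ↔ code π t = 0 := by
  rw [code_phi]
  exact swap01_val_one_iff _ (by omega) _

notation "R4" => ({(0, 1), (0, 2), (1, 1), (1, 2)} : Set (ℕ × ℕ))

variable {n : ℕ}

lemma valExt21_one (π : Equiv.Perm (Fin n)) (i : Fin 2 → Fin n) :
    valExt perm21 π i 1 = (π (i 1) : ℕ) + 1 := by
  show (π (i (perm21.symm ⟨0, by omega⟩)) : ℕ) + 1 = _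
  rw [show perm21.symm ⟨0, by omega⟩ = 1 by decide]

lemma valExt21_two (π : Equiv.Perm (Fin n)) (i : Fin 2 → Fin n) :
    valExt perm21 π i 2 = (π (i 0) : ℕ) + 1 := by
  show (π (i (perm21.symm ⟨1, by omega⟩)) : ℕ) + 1 = _
  rw [show perm21.symm ⟨1, by omega⟩ = 0 by decide]

lemma strictMono_fin2 {α : Type*} [Preorder α] {f : Fin 2 → α} (h : f 0 < f 1) :
    StrictMono f := by
  intro a b hab
  fin_cases a <;> fin_cases b <;> first | exact absurd hab (by decide) | exact h

lemma mem_R4_iff (a b : ℕ) : (a, b) ∈ R4 ↔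
    (a = 0 ∧ b = 1) ∨ (a = 0 ∧ b = 2) ∨ (a = 1 ∧ b = 1) ∨ (a = 1 ∧ b = 2) := by
  simp [Set.mem_insert_iff, Prod.ext_iff]

lemma mesh12_iff (π : Equiv.Perm (Fin n)) (i : Fin 2 → Fin n) :
    IsMeshOcc perm12 R4 π i ↔
      (i 0 < i 1 ∧ π (i 0) < π (i 1) ∧ ∀ j, j < i 1 → j ≠ i 0 → π j < π (i 0)) := by
  constructor
  · rintro ⟨hmono, hpat, hreg⟩
    have h01 : i 0 < i 1 := hmono (by decide)
    have hv : π (i 0) < π (i 1) := (hpat 0 1).2 (by decide)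
    refine ⟨h01, hv, fun j hj hne => ?_⟩
    by_contra hcon
    have hne' : π (i 0) < π j := by
      rcases lt_trichotomy (π j) (π (i 0)) with h | h | h
      · exact absurd h hcon
      · exact absurd (π.injective h) hne
      · exact h
    have hj1 : j ≠ i 1 := ne_of_lt hj
    have hcase2 : π j ≠ π (i 1) := fun hh => hj1 (π.injective hh)
    rcases lt_trichotomy j (i 0) with hc | hc | hc
    · rcases lt_or_gt_of_ne hcase2 with hd | hd
      · exact hreg 0 1 (by simp [mem_R4_iff]) ⟨j, by simp [posExt], by
          simpa [posExt] using (show (j : ℕ) < (i 0 : ℕ) from hc), by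
          simpa [valExt, perm12, Equiv.Perm.one_symm] using (show (π (i 0) : ℕ) < (π j : ℕ) from hne'), by
          simpa [valExt, perm12, Equiv.Perm.one_symm] using (show (π j : ℕ) < (π (i 1) : ℕ) from hd)⟩
      · exact hreg 0 2 (by simp [mem_R4_iff]) ⟨j, by simp [posExt], by
          simpa [posExt] using (show (j : ℕ) < (i 0 : ℕ) from hc), by
          simpa [valExt, perm12, Equiv.Perm.one_symm] using (show (π (i 1) : ℕ) < (π j : ℕ) from hd),
          Nat.succ_lt_succ (π j).isLt⟩
    · exact hne hc
    · rcases lt_or_gt_of_ne hcase2 with hd | hd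
      · exact hreg 1 1 (by simp [mem_R4_iff]) ⟨j, by
          simpa [posExt] using (show (i 0 : ℕ) < (j : ℕ) from hc), by
          simpa [posExt] using (show (j : ℕ) < (i 1 : ℕ) from hj), by
          simpa [valExt, perm12, Equiv.Perm.one_symm] using (show (π (i 0) : ℕ) < (π j : ℕ) from hne'), by
          simpa [valExt, perm12, Equiv.Perm.one_symm] using (show (π j : ℕ) < (π (i 1) : ℕ) from hd)⟩
      · exact hreg 1 2 (by simp [mem_R4_iff]) ⟨j, by
          simpa [posExt] using (show (i 0 : ℕ) < (j : ℕ) from hc), by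
          simpa [posExt] using (show (j : ℕ) < (i 1 : ℕ) from hj), by
          simpa [valExt, perm12, Equiv.Perm.one_symm] using (show (π (i 1) : ℕ) < (π j : ℕ) from hd),
          Nat.succ_lt_succ (π j).isLt⟩
  · rintro ⟨h01, hv, hmax⟩
    refine ⟨strictMono_fin2 h01, ?_, ?_⟩
    · intro a b
      fin_cases a <;> fin_cases b <;>
        simp [perm12, lt_irrefl] <;>
        first
          | exact hv
          | exact le_of_lt hv
          | exact not_lt.2 (le_of_lt hv)
    · intro a b hab
      rw [mem_R4_iff] at hab
      rintro ⟨j, hj1, hj2, hj3, hj4⟩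
      rcases hab with ⟨rfl, rfl⟩ | ⟨rfl, rfl⟩ | ⟨rfl, rfl⟩ | ⟨rfl, rfl⟩
      · simp [posExt, valExt, perm12] at hj2 hj3 hj4
        have hjlt : j < i 1 := lt_trans (show j < i 0 from hj2) h01
        have hjne : j ≠ i 0 := ne_of_lt hj2
        exact absurd (hmax j hjlt hjne) (not_lt.2 (le_of_lt hj3))
      · simp [posExt, valExt, perm12] at hj2 hj3 hj4
        have hjlt : j < i 1 := lt_trans (show j < i 0 from hj2) h01
        have hjne : j ≠ i 0 := ne_of_lt hj2
        have : π (i 0) < π j := lt_trans hv hj3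
        exact absurd (hmax j hjlt hjne) (not_lt.2 (le_of_lt this))
      · simp [posExt, valExt, perm12] at hj1 hj2 hj3 hj4
        have hjlt : j < i 1 := hj2
        have hjne : j ≠ i 0 := ne_of_gt hj1
        exact absurd (hmax j hjlt hjne) (not_lt.2 (le_of_lt hj3))
      · simp [posExt, valExt, perm12] at hj1 hj2 hj3 hj4
        have hjlt : j < i 1 := hj2
        have hjne : j ≠ i 0 := ne_of_gt hj1
        have : π (i 0) < π j := lt_trans hv hj3
        exact absurd (hmax j hjlt hjne) (not_lt.2 (le_of_lt this))
lemma mesh21_iff (π : Equiv.Perm (Fin n)) (i : Fin 2 → Fin n) :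
    IsMeshOcc perm21 R4 π i ↔
      (i 0 < i 1 ∧ π (i 1) < π (i 0) ∧ ∀ j, j < i 1 → j ≠ i 0 → π j < π (i 1)) := by
  constructor
  · rintro ⟨hmono, hpat, hreg⟩
    have h01 : i 0 < i 1 := hmono (by decide)
    have hv : π (i 1) < π (i 0) := (hpat 1 0).2 (by decide)
    refine ⟨h01, hv, fun j hj hne => ?_⟩
    by_contra hcon
    have hne1 : π (i 1) < π j := by
      rcases lt_trichotomy (π j) (π (i 1)) with h | h | h
      · exact absurd h hcon
      · exact absurd (π.injective h) (ne_of_lt hj)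
      · exact h
    have hne0 : π j ≠ π (i 0) := fun hh => hne (π.injective hh)
    rcases lt_trichotomy j (i 0) with hc | hc | hc
    · rcases lt_or_gt_of_ne hne0 with hd | hd
      · exact hreg 0 1 (by simp [mem_R4_iff]) ⟨j, by simp [posExt], by
          simpa [posExt] using (show (j : ℕ) < (i 0 : ℕ) from hc), by
          rw [valExt21_one]; omega, by
          rw [show (1 : ℕ) + 1 = 2 from rfl, valExt21_two]
          exact Nat.succ_lt_succ hd⟩
      · exact hreg 0 2 (by simp [mem_R4_iff]) ⟨j, by simp [posExt], by
          simpa [posExt] using (show (j : ℕ) < (i 0 : ℕ) from hc), by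
          rw [valExt21_two]; exact Nat.succ_lt_succ hd,
          Nat.succ_lt_succ (π j).isLt⟩
    · exact hne hc
    · rcases lt_or_gt_of_ne hne0 with hd | hd
      · exact hreg 1 1 (by simp [mem_R4_iff]) ⟨j, by
          simpa [posExt] using (show (i 0 : ℕ) < (j : ℕ) from hc), by
          simpa [posExt] using (show (j : ℕ) < (i 1 : ℕ) from hj), by
          rw [valExt21_one]; omega, by
          rw [show (1 : ℕ) + 1 = 2 from rfl, valExt21_two]
          exact Nat.succ_lt_succ hd⟩
      · exact hreg 1 2 (by simp [mem_R4_iff]) ⟨j, by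
          simpa [posExt] using (show (i 0 : ℕ) < (j : ℕ) from hc), by
          simpa [posExt] using (show (j : ℕ) < (i 1 : ℕ) from hj), by
          rw [valExt21_two]; exact Nat.succ_lt_succ hd,
          Nat.succ_lt_succ (π j).isLt⟩
  · rintro ⟨h01, hv, hmax⟩
    refine ⟨strictMono_fin2 h01, ?_, ?_⟩
    · intro a b
      fin_cases a <;> fin_cases b <;>
        simp [perm21, Equiv.swap_apply_left, Equiv.swap_apply_right] <;>
        first
          | exact hv
          | exact le_of_lt hv
          | exact not_lt.2 (le_of_lt hv)
    · intro a b hab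
      rw [mem_R4_iff] at hab
      rintro ⟨j, hj1, hj2, hj3, hj4⟩
      have hjlt1 : (j : ℕ) + 1 < n + 1 := Nat.succ_lt_succ j.isLt
      rcases hab with ⟨rfl, rfl⟩ | ⟨rfl, rfl⟩ | ⟨rfl, rfl⟩ | ⟨rfl, rfl⟩
      · rw [valExt21_one] at hj3
        rw [show (1 : ℕ) + 1 = 2 from rfl, valExt21_two] at hj4
        simp [posExt] at hj2
        have hjlt : j < i 1 := lt_trans hj2 h01
        have hjne : j ≠ i 0 := ne_of_lt hj2
        have : π (i 1) < π j := by rw [Fin.lt_def]; omega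
        exact absurd (hmax j hjlt hjne) (not_lt.2 (le_of_lt this))
      · rw [valExt21_two] at hj3
        simp [posExt] at hj2
        have hjlt : j < i 1 := lt_trans hj2 h01
        have hjne : j ≠ i 0 := ne_of_lt hj2
        have : π (i 1) < π j := by
          have := Fin.lt_def.1 hv
          rw [Fin.lt_def]; omega
        exact absurd (hmax j hjlt hjne) (not_lt.2 (le_of_lt this))
      · rw [valExt21_one] at hj3
        rw [show (1 : ℕ) + 1 = 2 from rfl, valExt21_two] at hj4
        simp [posExt] at hj1 hj2
        have hjlt : j < i 1 := hj2
        have hjne : j ≠ i 0 := ne_of_gt hj1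
        have : π (i 1) < π j := by rw [Fin.lt_def]; omega
        exact absurd (hmax j hjlt hjne) (not_lt.2 (le_of_lt this))
      · rw [valExt21_two] at hj3
        simp [posExt] at hj1 hj2
        have hjlt : j < i 1 := hj2
        have hjne : j ≠ i 0 := ne_of_gt hj1
        have : π (i 1) < π j := by
          have := Fin.lt_def.1 hv
          rw [Fin.lt_def]; omega
        exact absurd (hmax j hjlt hjne) (not_lt.2 (le_of_lt this))

noncomputable def statA (π : Equiv.Perm (Fin n)) : ℕ :=
  Nat.card {t : Fin n // (t : ℕ) ≠ 0 ∧ code π t = 0}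
noncomputable def statB (π : Equiv.Perm (Fin n)) : ℕ :=
  Nat.card {t : Fin n // code π t = 1}

lemma occ12_eq (π : Equiv.Perm (Fin n)) : occ perm12 R4 π = statA π := by
  apply Nat.card_congr
  refine Equiv.ofBijective (fun x => ⟨x.1 1, ?_⟩) ⟨?_, ?_⟩
  · obtain ⟨h01, hv, hmax⟩ := (mesh12_iff π x.1).1 x.2
    constructor
    · have : (x.1 0 : ℕ) < (x.1 1 : ℕ) := h01
      omega
    · rw [code_eq_zero_iff]
      intro s hs
      by_cases hse : s = x.1 0
      · rw [hse]; exact hv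
      · exact lt_trans (hmax s hs hse) hv
  · rintro ⟨i, hi⟩ ⟨i', hi'⟩ heq
    simp only [Subtype.mk.injEq] at heq
    obtain ⟨h01, hv, hmax⟩ := (mesh12_iff π i).1 hi
    obtain ⟨h01', hv', hmax'⟩ := (mesh12_iff π i').1 hi'
    have h0 : i 0 = i' 0 := by
      by_contra hne
      have ha : π (i' 0) < π (i 0) :=
        hmax (i' 0) (heq ▸ h01') (fun hh => hne hh.symm)
      have hb : π (i 0) < π (i' 0) :=
        hmax' (i 0) (heq ▸ h01) hne
      exact absurd ha (not_lt.2 (le_of_lt hb))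
    apply Subtype.ext
    funext a
    fin_cases a
    · exact h0
    · exact heq
  · rintro ⟨t, ht, hc⟩
    have hpos : (Finset.univ.filter (fun s => s < t)).Nonempty := by
      refine ⟨⟨0, t.pos⟩, ?_⟩
      simp only [Finset.mem_filter, Finset.mem_univ, true_and]
      exact Fin.lt_def.2 (by simpa using Nat.pos_of_ne_zero ht)
    obtain ⟨u, humem, hmaxu⟩ := Finset.exists_max_image _ (fun s => π s) hpos
    simp only [Finset.mem_filter, Finset.mem_univ, true_and] at humem
    set i : Fin 2 → Fin n := fun a => if a = 0 then u else t with hidef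
    have hi0 : i 0 = u := rfl
    have hi1 : i 1 = t := rfl
    have hall := (code_eq_zero_iff π t).1 hc
    have hocc : IsMeshOcc perm12 R4 π i := by
      rw [mesh12_iff]
      refine ⟨?_, ?_, ?_⟩
      · rw [hi0, hi1]; exact humem
      · rw [hi0, hi1]; exact hall u humem
      · rw [hi0, hi1]
        intro j hj hju
        have hle : π j ≤ π u := hmaxu j (by simp [hj])
        exact lt_of_le_of_ne hle (fun hh => hju (π.injective hh))
    exact ⟨⟨i, hocc⟩, Subtype.ext hi1⟩

lemma occ21_eq (π : Equiv.Perm (Fin n)) : occ perm21 R4 π = statB π := by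
  apply Nat.card_congr
  refine Equiv.ofBijective (fun x => ⟨x.1 1, ?_⟩) ⟨?_, ?_⟩
  · obtain ⟨h01, hv, hmax⟩ := (mesh21_iff π x.1).1 x.2
    rw [code_eq_one_iff]
    exact ⟨x.1 0, h01, hv, hmax⟩
  · rintro ⟨i, hi⟩ ⟨i', hi'⟩ heq
    simp only [Subtype.mk.injEq] at heq
    obtain ⟨h01, hv, hmax⟩ := (mesh21_iff π i).1 hi
    obtain ⟨h01', hv', hmax'⟩ := (mesh21_iff π i').1 hi'
    have h0 : i 0 = i' 0 := by
      by_contra hne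
      have ha : π (i' 0) < π (i 1) :=
        hmax (i' 0) (heq ▸ h01') (fun hh => hne hh.symm)
      have ha' : π (i' 0) < π (i' 1) := by rw [← heq]; exact ha
      exact absurd ha' (not_lt.2 (le_of_lt hv'))
    apply Subtype.ext
    funext a
    fin_cases a
    · exact h0
    · exact heq
  · rintro ⟨t, hc⟩
    obtain ⟨u, hu, hv, hmax⟩ := (code_eq_one_iff π t).1 hc
    set i : Fin 2 → Fin n := fun a => if a = 0 then u else t with hidef
    have hi0 : i 0 = u := rfl
    have hi1 : i 1 = t := rfl
    have hocc : IsMeshOcc perm21 R4 π i := by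
      rw [mesh21_iff]
      refine ⟨?_, ?_, ?_⟩
      · rw [hi0, hi1]; exact hu
      · rw [hi0, hi1]; exact hv
      · rw [hi0, hi1]; exact hmax
    exact ⟨⟨i, hocc⟩, Subtype.ext hi1⟩

lemma statA_phi (π : Equiv.Perm (Fin n)) : statA (Phi π) = statB π := by
  apply Nat.card_congr
  apply Equiv.subtypeEquivRight
  intro t
  constructor
  · rintro ⟨ht, hc⟩
    exact (code_phi_zero_iff π t ht).1 hc
  · intro hc
    have ht : (t : ℕ) ≠ 0 := by have := code_le π t; omega
    exact ⟨ht, (code_phi_zero_iff π t ht).2 hc⟩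

lemma statB_phi (π : Equiv.Perm (Fin n)) : statB (Phi π) = statA π := by
  apply Nat.card_congr
  apply Equiv.subtypeEquivRight
  intro t
  constructor
  · intro hc
    have ht : (t : ℕ) ≠ 0 := by have := code_le (Phi π) t; omega
    exact ⟨ht, (code_phi_one_iff π t ht).1 hc⟩
  · rintro ⟨ht, hc⟩
    exact (code_phi_one_iff π t ht).2 hc

end Aux

theorem statement_13 :
    JointlyEquidistributed perm12 ({(0, 1), (0, 2), (1, 1), (1, 2)} : Set (ℕ × ℕ))
      perm21 ({(0, 1), (0, 2), (1, 1), (1, 2)} : Set (ℕ × ℕ)) := by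
  intro n k ℓ
  apply Nat.card_congr
  apply Equiv.subtypeEquiv (Phi (n := n))
  intro π
  simp only [occ12_eq, occ21_eq, statA_phi, statB_phi]
  exact and_comm
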